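/- Let V be a finite set, let c : V × V → ℝ≥0 satisfy c(v,v) = 0 for all v ∈ V and the triangle inequality c(x,z) ≤ c(x,y) + c(y,z) for all x,y,z ∈ V, and let k ≥ 1. (i) Let W be a closed walk visiting t vertices (with repetitions allowed) with k ≤ t − 2, and let W' be the closed walk obtained from W by omitting one vertex visit. Then c^{(k)}(W') ≤ c^{(k)}(W). (ii) Let W be a (non-closed) walk and let W' be the walk obtained from W by omitting one vertex visit. Then c^{(k)}(W') ≤ c^{(k)}(W). -/

import Mathlib

noncomputable section

/-- The `k`-hop cost of a closed walk given as a cyclic list `w_1, …, w_t`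
(repeated vertices allowed): `∑_{Δ=1}^{k} ∑_{i=1}^{t} c(w_i, w_{i+Δ})`, indices mod `t`. -/
def cycHopCost {V : Type*} (c : V → V → ℝ) (k : ℕ) (l : List V) : ℝ :=
  ∑ Δ ∈ Finset.Icc 1 k, (List.zipWith c l (l.rotate Δ)).sum

/-- The `k`-hop cost of a (non-closed) walk `w_1, …, w_t` (repeated vertices allowed):
`∑_{Δ=1}^{k} ∑_{i=1}^{t-Δ} c(w_i, w_{i+Δ})`. -/
def walkHopCost {V : Type*} (c : V → V → ℝ) (k : ℕ) (l : List V) : ℝ :=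
  ∑ Δ ∈ Finset.Icc 1 k, (List.zipWith c l (l.drop Δ)).sum

namespace S6
variable {V : Type*}

lemma sum_zipWith (c : V → V → ℝ) (d : V) : ∀ (l1 l2 : List V),
    (List.zipWith c l1 l2).sum =
      ∑ j ∈ Finset.range (min l1.length l2.length), c (l1.getD j d) (l2.getD j d)
  | [], l2 => by simp
  | a :: l1, [] => by simp
  | a :: l1, b :: l2 => by
    rw [List.zipWith_cons_cons, List.sum_cons, sum_zipWith c d l1 l2]
    rw [List.length_cons, List.length_cons, Nat.succ_min_succ, Finset.sum_range_succ']
    simp [add_comm]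

lemma getD_rotate (l : List V) (d : V) (n a : ℕ) (h : a < l.length) :
    (l.rotate n).getD a d = l.getD ((a + n) % l.length) d := by
  have h1 : a < (l.rotate n).length := by simpa using h
  have h2 : (a + n) % l.length < l.length := Nat.mod_lt _ (by omega)
  rw [List.getD_eq_getElem _ _ h1, List.getD_eq_getElem _ _ h2, List.getElem_rotate]

lemma walk_eq (c : V → V → ℝ) (k : ℕ) (d : V) (l : List V) :
    walkHopCost c k l =
      ∑ Δ ∈ Finset.Icc 1 k, ∑ a ∈ Finset.range (l.length - Δ),
        c (l.getD a d) (l.getD (a + Δ) d) := by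
  unfold walkHopCost
  refine Finset.sum_congr rfl fun Δ _ => ?_
  rw [sum_zipWith c d]
  have hmin : min l.length (l.drop Δ).length = l.length - Δ := by
    simp [List.length_drop]
  rw [hmin]
  refine Finset.sum_congr rfl fun a ha => ?_
  congr 1
  rw [List.getD_eq_getElem?_getD, List.getD_eq_getElem?_getD, List.getElem?_drop]
  congr 2
  omega

lemma cyc_eq (c : V → V → ℝ) (k : ℕ) (d : V) (l : List V) :
    cycHopCost c k l =
      ∑ Δ ∈ Finset.Icc 1 k, ∑ a ∈ Finset.range l.length,
        c (l.getD a d) (l.getD ((a + Δ) % l.length) d) := by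
  unfold cycHopCost
  refine Finset.sum_congr rfl fun Δ _ => ?_
  rw [sum_zipWith c d]
  have hmin : min l.length (l.rotate Δ).length = l.length := by simp
  rw [hmin]
  refine Finset.sum_congr rfl fun a ha => ?_
  rw [Finset.mem_range] at ha
  rw [getD_rotate _ _ _ _ ha]

lemma cyc_rotate (c : V → V → ℝ) (k : ℕ) (l : List V) (n : ℕ) :
    cycHopCost c k (l.rotate n) = cycHopCost c k l := by
  rcases l with _ | ⟨v, l'⟩
  · simp [List.rotate_nil]
  set l := v :: l' with hl
  set d := v
  have ht : 0 < l.length := by simp [hl]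
  rw [cyc_eq c k d, cyc_eq c k d, List.length_rotate]
  refine Finset.sum_congr rfl fun Δ _ => ?_
  refine Finset.sum_nbij' (fun a => (a + n) % l.length)
    (fun b => (b + (l.length - n % l.length)) % l.length) ?_ ?_ ?_ ?_ ?_
  · intro a _; exact Finset.mem_range.mpr (Nat.mod_lt _ ht)
  · intro a _; exact Finset.mem_range.mpr (Nat.mod_lt _ ht)
  · intro a ha
    rw [Finset.mem_range] at ha
    show ((a + n) % l.length + (l.length - n % l.length)) % l.length = a
    rw [Nat.mod_add_mod]
    have hd := Nat.div_add_mod n l.length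
    have hmul : l.length * (n / l.length + 1) = l.length * (n / l.length) + l.length := by ring
    have : a + n + (l.length - n % l.length) = a + l.length * (n / l.length + 1) := by
      have : n % l.length < l.length := Nat.mod_lt _ ht
      omega
    rw [this, Nat.add_mul_mod_self_left, Nat.mod_eq_of_lt ha]
  · intro a ha
    rw [Finset.mem_range] at ha
    show ((a + (l.length - n % l.length)) % l.length + n) % l.length = a
    rw [Nat.mod_add_mod]
    have hd := Nat.div_add_mod n l.length
    have hmul : l.length * (n / l.length + 1) = l.length * (n / l.length) + l.length := by ring
    have : a + (l.length - n % l.length) + n = a + l.length * (n / l.length + 1) := by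
      have : n % l.length < l.length := Nat.mod_lt _ ht
      omega
    rw [this, Nat.add_mul_mod_self_left, Nat.mod_eq_of_lt ha]
  · intro a ha
    rw [Finset.mem_range] at ha
    have h2 : (a + Δ) % l.length < l.length := Nat.mod_lt _ ht
    rw [getD_rotate _ _ _ _ ha, getD_rotate _ _ _ _ h2]
    congr 2
    rw [Nat.mod_add_mod, Nat.mod_add_mod]
    congr 1
    omega

lemma key {α : Type*} [DecidableEq α] {A B P : Finset α} {g g' : α → ℝ} {Ψ ψ : α → α}
    (hP : P ⊆ A)
    (hΨmem : ∀ a ∈ A, Ψ a ∈ B)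
    (hΨinj : ∀ a ∈ A, ∀ b ∈ A, Ψ a = Ψ b → a = b)
    (hψmem : ∀ a ∈ P, ψ a ∈ B)
    (hψinj : ∀ a ∈ P, ∀ b ∈ P, ψ a = ψ b → a = b)
    (hdisj : ∀ a ∈ A, ∀ b ∈ P, Ψ a ≠ ψ b)
    (heq : ∀ a ∈ A, a ∉ P → g' a = g (Ψ a))
    (hle : ∀ a ∈ P, g' a ≤ g (Ψ a) + g (ψ a))
    (hg : ∀ b ∈ B, 0 ≤ g b) :
    ∑ a ∈ A, g' a ≤ ∑ b ∈ B, g b := by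
  have hdisj' : Disjoint (A.image Ψ) (P.image ψ) := by
    rw [Finset.disjoint_left]
    rintro x hx hx'
    rw [Finset.mem_image] at hx hx'
    obtain ⟨a, ha, rfl⟩ := hx
    obtain ⟨b, hb, hba⟩ := hx'
    exact hdisj a ha b hb hba.symm
  have h1 : ∑ a ∈ A, g' a ≤ ∑ a ∈ A, g (Ψ a) + ∑ a ∈ P, g (ψ a) := by
    rw [← Finset.sum_sdiff hP (f := g'), ← Finset.sum_sdiff hP (f := fun a => g (Ψ a))]
    have e1 : ∑ a ∈ A \ P, g' a = ∑ a ∈ A \ P, g (Ψ a) := by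
      refine Finset.sum_congr rfl fun a ha => ?_
      rw [Finset.mem_sdiff] at ha
      exact heq a ha.1 ha.2
    have e2 : ∑ a ∈ P, g' a ≤ ∑ a ∈ P, g (Ψ a) + ∑ a ∈ P, g (ψ a) := by
      rw [← Finset.sum_add_distrib]
      exact Finset.sum_le_sum hle
    rw [e1]
    linarith
  have h2 : ∑ a ∈ A, g (Ψ a) + ∑ a ∈ P, g (ψ a) = ∑ b ∈ A.image Ψ ∪ P.image ψ, g b := by
    rw [Finset.sum_union hdisj', Finset.sum_image hΨinj, Finset.sum_image hψinj]
  have h3 : A.image Ψ ∪ P.image ψ ⊆ B := by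
    intro x hx
    rw [Finset.mem_union, Finset.mem_image, Finset.mem_image] at hx
    rcases hx with ⟨a, ha, rfl⟩ | ⟨a, ha, rfl⟩
    · exact hΨmem a ha
    · exact hψmem a ha
  calc ∑ a ∈ A, g' a ≤ ∑ b ∈ A.image Ψ ∪ P.image ψ, g b := by rw [← h2]; exact h1
    _ ≤ ∑ b ∈ B, g b := Finset.sum_le_sum_of_subset_of_nonneg h3 fun b hb _ => hg b hb
lemma cyc_core (c : V → V → ℝ) (hc0 : ∀ x y, 0 ≤ c x y)
    (htri : ∀ x y z, c x z ≤ c x y + c y z)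
    (f : ℕ → V) (n k : ℕ) (hkn : k ≤ n - 1) (hn : 1 ≤ n) :
    ∑ p ∈ Finset.Icc 1 k ×ˢ Finset.range n, c (f (p.2 + 1)) (f ((p.2 + p.1) % n + 1))
      ≤ ∑ q ∈ Finset.Icc 1 k ×ˢ Finset.range (n + 1), c (f q.2) (f ((q.2 + q.1) % (n + 1))) := by
  classical
  refine key (P := (Finset.Icc 1 k ×ˢ Finset.range n).filter
      (fun p => p.1 = k ∧ n ≤ p.2 + p.1))
    (Ψ := fun p => if p.2 + p.1 < n then (p.1, p.2 + 1)
      else if p.1 < k then (p.1 + 1, p.2 + 1) else (n - p.2, p.2 + 1))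
    (ψ := fun p => (p.2 + p.1 + 1 - n, 0))
    (Finset.filter_subset _ _) ?_ ?_ ?_ ?_ ?_ ?_ ?_ ?_
  · rintro ⟨Δ, a⟩ ha
    simp only [Finset.mem_product, Finset.mem_Icc, Finset.mem_range] at ha ⊢
    split_ifs with h1 h2 <;> simp only [Finset.mem_product, Finset.mem_Icc, Finset.mem_range] <;>
      omega
  · rintro ⟨Δ, a⟩ ha ⟨Δ', a'⟩ hb h
    simp only [Finset.mem_product, Finset.mem_Icc, Finset.mem_range] at ha hb
    dsimp only at h
    split_ifs at h <;> simp only [Prod.mk.injEq] at h ⊢ <;> omega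
  · rintro ⟨Δ, a⟩ hp
    simp only [Finset.mem_filter, Finset.mem_product, Finset.mem_Icc, Finset.mem_range] at hp
    simp only [Finset.mem_product, Finset.mem_Icc, Finset.mem_range]
    omega
  · rintro ⟨Δ, a⟩ ha ⟨Δ', a'⟩ hb h
    simp only [Finset.mem_filter, Finset.mem_product, Finset.mem_Icc, Finset.mem_range] at ha hb
    simp only [Prod.mk.injEq] at h ⊢
    omega
  · rintro ⟨Δ, a⟩ ha ⟨Δ', a'⟩ hb
    simp only [Finset.mem_product, Finset.mem_Icc, Finset.mem_range] at ha
    dsimp only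
    split_ifs <;> simp only [Prod.mk.injEq, ne_eq, not_and] <;> omega
  · rintro ⟨Δ, a⟩ ha hp
    simp only [Finset.mem_product, Finset.mem_Icc, Finset.mem_range] at ha
    simp only [Finset.mem_filter, Finset.mem_product, Finset.mem_Icc, Finset.mem_range] at hp
    dsimp only
    split_ifs with h1 h2
    · have e1 : (a + Δ) % n = a + Δ := Nat.mod_eq_of_lt (by omega)
      have e2 : (a + 1 + Δ) % (n + 1) = a + 1 + Δ := Nat.mod_eq_of_lt (by omega)
      simp only [e1, e2]
      have : a + 1 + Δ = a + Δ + 1 := by omega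
      rw [this]
    · have e1 : (a + Δ) % n = a + Δ - n := by
        rw [Nat.mod_eq_sub_mod (by omega)]
        exact Nat.mod_eq_of_lt (by omega)
      have e2 : (a + 1 + (Δ + 1)) % (n + 1) = a + Δ + 1 - n := by
        rw [Nat.mod_eq_sub_mod (by omega)]
        have : a + 1 + (Δ + 1) - (n + 1) = a + Δ + 1 - n := by omega
        rw [this]
        exact Nat.mod_eq_of_lt (by omega)
      simp only [e1, e2]
      have : a + Δ - n + 1 = a + Δ + 1 - n := by omega
      rw [this]
    · exfalso; omega
  · rintro ⟨Δ, a⟩ hp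
    simp only [Finset.mem_filter, Finset.mem_product, Finset.mem_Icc, Finset.mem_range] at hp
    obtain ⟨⟨⟨hΔ1, hΔ2⟩, han⟩, hΔk, hna⟩ := hp
    subst hΔk
    dsimp only
    rw [if_neg (by omega), if_neg (by omega)]
    have e1 : (a + Δ) % n = a + Δ - n := by
      rw [Nat.mod_eq_sub_mod (by omega)]
      exact Nat.mod_eq_of_lt (by omega)
    have e2 : a + 1 + (n - a) = n + 1 := by omega
    have e3 : (0 + (a + Δ + 1 - n)) % (n + 1) = a + Δ + 1 - n := by
      rw [Nat.zero_add]
      exact Nat.mod_eq_of_lt (by omega)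
    simp only [e1, e2, e3, Nat.mod_self]
    have : a + Δ - n + 1 = a + Δ + 1 - n := by omega
    rw [this]
    exact htri _ _ _
  · intro b _
    exact hc0 _ _
lemma shape_cyc (s : Finset ℕ) (m : ℕ) (F : ℕ → ℕ → ℝ) :
    ∑ Δ ∈ s, ∑ a ∈ Finset.range m, F Δ a = ∑ p ∈ s ×ˢ Finset.range m, F p.1 p.2 :=
  (Finset.sum_product s (Finset.range m) (fun p => F p.1 p.2)).symm

lemma shape (m k : ℕ) (F : ℕ → ℕ → ℝ) :
    ∑ Δ ∈ Finset.Icc 1 k, ∑ a ∈ Finset.range (m - Δ), F Δ a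
      = ∑ p ∈ (Finset.Icc 1 k ×ˢ Finset.range m).filter (fun p => p.2 + p.1 < m), F p.1 p.2 := by
  classical
  rw [Finset.sum_filter]
  rw [Finset.sum_product (f := fun p : ℕ × ℕ => if p.2 + p.1 < m then F p.1 p.2 else 0)]
  refine Finset.sum_congr rfl fun Δ _ => ?_
  dsimp only
  rw [← Finset.sum_filter]
  refine Finset.sum_congr ?_ fun a _ => rfl
  ext a
  simp only [Finset.mem_filter, Finset.mem_range]
  omega

lemma cyc_head (c : V → V → ℝ) (hc0 : ∀ x y, 0 ≤ c x y)
    (htri : ∀ x y z, c x z ≤ c x y + c y z) (k : ℕ) (v : V) (l : List V)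
    (hkn : k ≤ l.length - 1) (hn : 1 ≤ l.length) :
    cycHopCost c k l ≤ cycHopCost c k (v :: l) := by
  set n := l.length with hnl
  set f : ℕ → V := fun a => (v :: l).getD a v with hf
  have eL : cycHopCost c k l
      = ∑ p ∈ Finset.Icc 1 k ×ˢ Finset.range n,
          c (f (p.2 + 1)) (f ((p.2 + p.1) % n + 1)) := by
    rw [cyc_eq c k v l, shape_cyc]
    refine Finset.sum_congr rfl fun p _ => ?_
    simp only [hf, List.getD_cons_succ, ← hnl]
  have eR : cycHopCost c k (v :: l)
      = ∑ q ∈ Finset.Icc 1 k ×ˢ Finset.range (n + 1),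
          c (f q.2) (f ((q.2 + q.1) % (n + 1))) := by
    rw [cyc_eq c k v (v :: l)]
    simp only [List.length_cons, ← hnl]
    rw [shape_cyc]
  rw [eL, eR]
  exact cyc_core c hc0 htri f n k hkn hn
lemma walk_core (c : V → V → ℝ) (hc0 : ∀ x y, 0 ≤ c x y)
    (htri : ∀ x y z, c x z ≤ c x y + c y z)
    (f : ℕ → V) (t i k : ℕ) (hi : i < t) :
    ∑ p ∈ (Finset.Icc 1 k ×ˢ Finset.range (t - 1)).filter (fun p => p.2 + p.1 < t - 1),
        c (f (if p.2 < i then p.2 else p.2 + 1))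
          (f (if p.2 + p.1 < i then p.2 + p.1 else p.2 + p.1 + 1))
      ≤ ∑ q ∈ (Finset.Icc 1 k ×ˢ Finset.range t).filter (fun q => q.2 + q.1 < t),
          c (f q.2) (f (q.2 + q.1)) := by
  classical
  refine key (P := ((Finset.Icc 1 k ×ˢ Finset.range (t - 1)).filter
        (fun p => p.2 + p.1 < t - 1)).filter
      (fun p => p.1 = k ∧ p.2 < i ∧ i ≤ p.2 + p.1))
    (Ψ := fun p => if p.2 + p.1 < i then p else if i ≤ p.2 then (p.1, p.2 + 1)
      else if p.1 < k then (p.1 + 1, p.2) else (i - p.2, p.2))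
    (ψ := fun p => (p.2 + k + 1 - i, i))
    (Finset.filter_subset _ _) ?_ ?_ ?_ ?_ ?_ ?_ ?_ ?_
  · rintro ⟨Δ, a⟩ ha
    simp only [Finset.mem_filter, Finset.mem_product, Finset.mem_Icc, Finset.mem_range] at ha ⊢
    split_ifs <;>
      simp only [Finset.mem_filter, Finset.mem_product, Finset.mem_Icc, Finset.mem_range] <;>
      omega
  · rintro ⟨Δ, a⟩ ha ⟨Δ', a'⟩ hb h
    simp only [Finset.mem_filter, Finset.mem_product, Finset.mem_Icc, Finset.mem_range] at ha hb
    dsimp only at h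
    split_ifs at h <;> simp only [Prod.mk.injEq] at h ⊢ <;> omega
  · rintro ⟨Δ, a⟩ hp
    simp only [Finset.mem_filter, Finset.mem_product, Finset.mem_Icc, Finset.mem_range] at hp ⊢
    omega
  · rintro ⟨Δ, a⟩ ha ⟨Δ', a'⟩ hb h
    simp only [Finset.mem_filter, Finset.mem_product, Finset.mem_Icc, Finset.mem_range] at ha hb
    simp only [Prod.mk.injEq] at h ⊢
    omega
  · rintro ⟨Δ, a⟩ ha ⟨Δ', a'⟩ hb
    simp only [Finset.mem_filter, Finset.mem_product, Finset.mem_Icc, Finset.mem_range] at ha hb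
    dsimp only
    split_ifs <;> simp only [Prod.mk.injEq, ne_eq, not_and] <;> omega
  · rintro ⟨Δ, a⟩ ha hp
    simp only [Finset.mem_filter, Finset.mem_product, Finset.mem_Icc, Finset.mem_range] at ha
    simp only [Finset.mem_filter, Finset.mem_product, Finset.mem_Icc, Finset.mem_range] at hp
    by_cases h1 : a + Δ < i
    · simp only [if_pos h1, if_pos (show a < i by omega)]
    · by_cases h2 : i ≤ a
      · simp only [if_neg h1, if_pos h2, if_neg (show ¬ a < i by omega)]
        have : a + 1 + Δ = a + Δ + 1 := by omega
        rw [this]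
      · have h3 : Δ < k := by omega
        simp only [if_neg h1, if_neg h2, if_pos h3, if_pos (show a < i by omega)]
        have : a + (Δ + 1) = a + Δ + 1 := by omega
        rw [this]
  · rintro ⟨Δ, a⟩ hp
    simp only [Finset.mem_filter, Finset.mem_product, Finset.mem_Icc, Finset.mem_range] at hp
    simp only [if_neg (show ¬ a + Δ < i by omega), if_neg (show ¬ i ≤ a by omega),
      if_neg (show ¬ Δ < k by omega), if_pos (show a < i by omega)]
    have e1 : a + (i - a) = i := by omega
    have e2 : i + (a + k + 1 - i) = a + Δ + 1 := by omega
    rw [e1, e2]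
    exact htri _ _ _
  · intro b _
    exact hc0 _ _
lemma walk_main (c : V → V → ℝ) (hc0 : ∀ x y, 0 ≤ c x y)
    (htri : ∀ x y z, c x z ≤ c x y + c y z) (k : ℕ) (W : List V) (i : ℕ)
    (hi : i < W.length) :
    walkHopCost c k (W.eraseIdx i) ≤ walkHopCost c k W := by
  have ht : 0 < W.length := by omega
  obtain ⟨d, l0, hW⟩ : ∃ d l0, W = d :: l0 :=
    List.exists_cons_of_ne_nil (by intro h; rw [h] at ht; simp at ht)
  set t := W.length with hts
  set f : ℕ → V := fun a => W.getD a d with hf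
  have hlen : (W.eraseIdx i).length = t - 1 := by rw [List.length_eraseIdx, if_pos hi]
  have hgetD : ∀ b, b < t - 1 → (W.eraseIdx i).getD b d = f (if b < i then b else b + 1) := by
    intro b hb
    have hb' : b < (W.eraseIdx i).length := by omega
    rw [List.getD_eq_getElem _ _ hb', List.getElem_eraseIdx]
    split_ifs
    all_goals exact (List.getD_eq_getElem _ _ (by omega)).symm
  have eL : walkHopCost c k (W.eraseIdx i)
      = ∑ p ∈ (Finset.Icc 1 k ×ˢ Finset.range (t - 1)).filter (fun p => p.2 + p.1 < t - 1),
          c (f (if p.2 < i then p.2 else p.2 + 1))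
            (f (if p.2 + p.1 < i then p.2 + p.1 else p.2 + p.1 + 1)) := by
    rw [walk_eq c k d (W.eraseIdx i), hlen, shape]
    refine Finset.sum_congr rfl fun p hp => ?_
    simp only [Finset.mem_filter, Finset.mem_product, Finset.mem_Icc, Finset.mem_range] at hp
    rw [hgetD p.2 (by omega), hgetD (p.2 + p.1) (by omega)]
  have eR : walkHopCost c k W
      = ∑ q ∈ (Finset.Icc 1 k ×ˢ Finset.range t).filter (fun q => q.2 + q.1 < t),
          c (f q.2) (f (q.2 + q.1)) := by
    rw [walk_eq c k d W, shape]
  rw [eL, eR]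
  exact walk_core c hc0 htri f t i k hi

lemma cyc_main (c : V → V → ℝ) (hc0 : ∀ x y, 0 ≤ c x y)
    (htri : ∀ x y z, c x z ≤ c x y + c y z) (k : ℕ) (hk : 1 ≤ k) (W : List V) (i : ℕ)
    (hi : i < W.length) (hK : k ≤ W.length - 2) :
    cycHopCost c k (W.eraseIdx i) ≤ cycHopCost c k W := by
  have ht : 0 < W.length := by omega
  have htk : (W.take i).length = i := by rw [List.length_take]; omega
  have h1 : (W.rotate i).eraseIdx 0 = W.drop (i + 1) ++ W.take i := by
    rw [List.rotate_eq_drop_append_take (le_of_lt hi), List.drop_eq_getElem_cons hi,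
      List.cons_append, List.eraseIdx_cons_zero]
  have hel : (W.eraseIdx i).length = W.length - 1 := by rw [List.length_eraseIdx, if_pos hi]
  have h2 : (W.eraseIdx i).rotate i = W.drop (i + 1) ++ W.take i := by
    rw [List.eraseIdx_eq_take_drop_succ,
      List.rotate_eq_drop_append_take
        (by rw [List.length_append, List.length_take, List.length_drop]; omega),
      List.drop_left' htk, List.take_left' htk]
  have hne : W.rotate i ≠ [] := by
    intro h
    have := congrArg List.length h
    rw [List.length_rotate, List.length_nil] at this
    omega
  obtain ⟨v, l, hvl⟩ := List.exists_cons_of_ne_nil hne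
  have hll : l.length = W.length - 1 := by
    have h3 := congrArg List.length hvl
    rw [List.length_rotate] at h3
    simp at h3
    omega
  calc cycHopCost c k (W.eraseIdx i)
      = cycHopCost c k ((W.eraseIdx i).rotate i) := (cyc_rotate _ _ _ _).symm
    _ = cycHopCost c k l := by rw [h2, ← h1, hvl, List.eraseIdx_cons_zero]
    _ ≤ cycHopCost c k (v :: l) := cyc_head c hc0 htri k v l (by omega) (by omega)
    _ = cycHopCost c k (W.rotate i) := by rw [hvl]
    _ = cycHopCost c k W := cyc_rotate _ _ _ _
end S6

/-- omitting a vertex visit does not increase the `k`-hop cost: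
(i) for closed walks with `k ≤ t − 2`, and (ii) for non-closed walks. -/
theorem statement6 {V : Type*} (c : V → V → ℝ) (k : ℕ) (hk : 1 ≤ k)
    (hc0 : ∀ x y, 0 ≤ c x y)
    (hcrefl : ∀ v, c v v = 0)
    (htri : ∀ x y z, c x z ≤ c x y + c y z) :
    (∀ (W : List V) (i : ℕ), i < W.length → k ≤ W.length - 2 →
      cycHopCost c k (W.eraseIdx i) ≤ cycHopCost c k W) ∧
    (∀ (W : List V) (i : ℕ), i < W.length →
      walkHopCost c k (W.eraseIdx i) ≤ walkHopCost c k W) := by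
  exact ⟨fun W i hi hK => S6.cyc_main c hc0 htri k hk W i hi hK,
    fun W i hi => S6.walk_main c hc0 htri k W i hi⟩

end
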